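/- If k_p, k_v > 0 with k_p + k_v < g, and μ_d = −k_p h(e_p) − k_v h(v) where h(u) = u/sqrt(1+u^T u), then the thrust u_t = ‖μ_d − g e3‖ satisfies the bounds 0 < g − k_p − k_v ≤ u_t ≤ g + k_p + k_v. In particular μ_d ∉ L. -/

import Mathlib

open Matrix

noncomputable section

/-- The Euclidean norm of a vector in ℝ³. -/
def vnorm (x : Fin 3 → ℝ) : ℝ := Real.sqrt (x ⬝ᵥ x)

/-- The bounded function `h(u) = (1 + uᵀu)^{-1/2} u`. -/
def hfun (u : Fin 3 → ℝ) : Fin 3 → ℝ := (Real.sqrt (1 + u ⬝ᵥ u))⁻¹ • u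

/-- The third basis vector `e₃ = (0,0,1)`. -/
def e3 : Fin 3 → ℝ := ![0, 0, 1]

/-- The singular set `L = {(0,0,z) : z ≥ g}`. -/
def Lsing (g : ℝ) : Set (Fin 3 → ℝ) := {x | x 0 = 0 ∧ x 1 = 0 ∧ g ≤ x 2}

lemma vnorm_eq_norm (x : Fin 3 → ℝ) :
    vnorm x = ‖(WithLp.equiv 2 (Fin 3 → ℝ)).symm x‖ := by
  rw [EuclideanSpace.norm_eq]
  simp [vnorm, dotProduct, Real.norm_eq_abs, sq_abs, pow_two]

lemma vnorm_add_le (a b : Fin 3 → ℝ) : vnorm (a + b) ≤ vnorm a + vnorm b := by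
  simp only [vnorm_eq_norm, show (WithLp.equiv 2 (Fin 3 → ℝ)).symm (a + b) = (WithLp.equiv 2 (Fin 3 → ℝ)).symm a + (WithLp.equiv 2 (Fin 3 → ℝ)).symm b from rfl]
  exact norm_add_le _ _

lemma vnorm_neg (a : Fin 3 → ℝ) : vnorm (-a) = vnorm a := by
  simp only [vnorm_eq_norm, show (WithLp.equiv 2 (Fin 3 → ℝ)).symm (-a) = -(WithLp.equiv 2 (Fin 3 → ℝ)).symm a from rfl, norm_neg]

lemma vnorm_nonneg (a : Fin 3 → ℝ) : 0 ≤ vnorm a := Real.sqrt_nonneg _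

lemma sub_vnorm_le (a b : Fin 3 → ℝ) : vnorm b - vnorm a ≤ vnorm (a - b) := by
  simp only [vnorm_eq_norm, show (WithLp.equiv 2 (Fin 3 → ℝ)).symm (a - b) = (WithLp.equiv 2 (Fin 3 → ℝ)).symm a - (WithLp.equiv 2 (Fin 3 → ℝ)).symm b from rfl]
  have := norm_sub_norm_le ((WithLp.equiv 2 (Fin 3 → ℝ)).symm b) ((WithLp.equiv 2 (Fin 3 → ℝ)).symm a)
  rw [← norm_neg ((WithLp.equiv 2 (Fin 3 → ℝ)).symm b - _), neg_sub] at this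
  linarith

lemma vnorm_smul (c : ℝ) (x : Fin 3 → ℝ) : vnorm (c • x) = |c| * vnorm x := by
  simp only [vnorm_eq_norm, show (WithLp.equiv 2 (Fin 3 → ℝ)).symm (c • x) = c • (WithLp.equiv 2 (Fin 3 → ℝ)).symm x from rfl, norm_smul, Real.norm_eq_abs]

lemma dot_self_nonneg (x : Fin 3 → ℝ) : 0 ≤ x ⬝ᵥ x :=
  Finset.sum_nonneg fun i _ => mul_self_nonneg (x i)

lemma vnorm_hfun_lt_one (u : Fin 3 → ℝ) : vnorm (hfun u) < 1 := by
  have hd := dot_self_nonneg u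
  have h1 : (0:ℝ) < 1 + u ⬝ᵥ u := by linarith
  have hs : 0 < Real.sqrt (1 + u ⬝ᵥ u) := Real.sqrt_pos.mpr h1
  rw [hfun, vnorm_smul, abs_of_nonneg (by positivity)]
  have : vnorm u = Real.sqrt (u ⬝ᵥ u) := rfl
  rw [this]
  rw [inv_mul_lt_one₀ hs]
  · exact Real.sqrt_lt_sqrt hd (by linarith)

lemma abs_comp2_le_vnorm (x : Fin 3 → ℝ) : |x 2| ≤ vnorm x := by
  rw [vnorm, ← Real.sqrt_sq_eq_abs]
  apply Real.sqrt_le_sqrt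
  have : x ⬝ᵥ x = x 0 * x 0 + x 1 * x 1 + x 2 * x 2 := by
    simp [dotProduct, Fin.sum_univ_three]
  nlinarith [mul_self_nonneg (x 0), mul_self_nonneg (x 1)]

lemma vnorm_e3 : vnorm e3 = 1 := by
  have : e3 ⬝ᵥ e3 = 1 := by simp [dotProduct, Fin.sum_univ_three, e3]
  simp [vnorm, this]

theorem thrust_bounds (g kp kv : ℝ) (hg : 0 < g) (hkp : 0 < kp) (hkv : 0 < kv)
    (hksum : kp + kv < g) (ep v : Fin 3 → ℝ)
    (μd : Fin 3 → ℝ) (hμd : μd = -(kp • hfun ep) - kv • hfun v)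
    (ut : ℝ) (hut : ut = vnorm (μd - g • e3)) :
    (0 < g - kp - kv ∧ g - kp - kv ≤ ut ∧ ut ≤ g + kp + kv) ∧ μd ∉ Lsing g := by
  have hep := vnorm_hfun_lt_one ep
  have hv := vnorm_hfun_lt_one v
  have hA : vnorm μd ≤ kp + kv := by
    have h1 : μd = -(kp • hfun ep + kv • hfun v) := by rw [hμd]; abel
    calc vnorm μd = vnorm (kp • hfun ep + kv • hfun v) := by rw [h1, vnorm_neg]
      _ ≤ vnorm (kp • hfun ep) + vnorm (kv • hfun v) := vnorm_add_le _ _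
      _ = kp * vnorm (hfun ep) + kv * vnorm (hfun v) := by
          rw [vnorm_smul, vnorm_smul, abs_of_pos hkp, abs_of_pos hkv]
      _ ≤ kp + kv := by nlinarith [vnorm_nonneg (hfun ep), vnorm_nonneg (hfun v)]
  have hge3 : vnorm (g • e3) = g := by
    rw [vnorm_smul, vnorm_e3, abs_of_pos hg]; ring
  have hlow : g - vnorm μd ≤ ut := by
    have := sub_vnorm_le μd (g • e3)
    rw [hge3] at this; linarith [hut ▸ this]
  have hup : ut ≤ vnorm μd + g := by
    have h2 : μd - g • e3 = μd + -(g • e3) := by abel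
    have := vnorm_add_le μd (-(g • e3))
    rw [vnorm_neg, hge3] at this
    rw [hut, h2]; exact this
  refine ⟨⟨by linarith, by linarith, by linarith⟩, ?_⟩
  intro hL
  have h2 := hL.2.2
  have := abs_comp2_le_vnorm μd
  have : μd 2 ≤ kp + kv := le_trans (le_abs_self _) (this.trans hA)
  linarith

end
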